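/- Let r ≥ 1, let n ≥ 1 be an integer, let ℓ₀ and λ₀ be positive definite real symmetric r×r matrices, and let (w_k)_{k≥1} be a sequence of positive definite real symmetric r×r matrices. Define L_0 = ℓ₀ and L_{k+1} = w_{k+1}·L_k·w_{k+1} + (1/n)·w_{k+1} for k ≥ 0 (each L_k is positive definite), and define Λ_0 = λ₀ and Λ_{k+1} = (w_{k+1} + (1/n)·L_k⁻¹)·Λ_k·(w_{k+1} + (1/n)·L_k⁻¹) for k ≥ 0. Then for every k ≥ 0: Λ_k = L_k·(w_k⁻¹ ⋯ w_1⁻¹)·ℓ₀⁻¹·λ₀·ℓ₀⁻¹·(w_1⁻¹ ⋯ w_k⁻¹)·L_k. -/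

import Mathlib

open Matrix

lemma my_smul_posDef {r : ℕ} {c : ℝ} (hc : 0 < c) {A : Matrix (Fin r) (Fin r) ℝ}
    (hA : A.PosDef) : (c • A).PosDef := by
  refine Matrix.PosDef.of_dotProduct_mulVec_pos ?_ (fun x hx => ?_)
  · unfold Matrix.IsHermitian
    rw [conjTranspose_smul, hA.1.eq]
    simp
  · have h := hA.dotProduct_mulVec_pos hx
    rw [smul_mulVec, dotProduct_smul]
    exact smul_pos hc h

lemma my_conj_posDef {r : ℕ} {A B : Matrix (Fin r) (Fin r) ℝ}
    (hA : A.PosDef) (hB : B.IsHermitian) (hBu : IsUnit B) : (B * A * B).PosDef := by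
  refine Matrix.PosDef.of_dotProduct_mulVec_pos ?_ (fun x hx => ?_)
  · unfold Matrix.IsHermitian
    rw [conjTranspose_mul, conjTranspose_mul, hA.1.eq, hB.eq, mul_assoc]
  · have hx' : B *ᵥ x ≠ 0 := by
      have hinj := Matrix.mulVec_injective_iff_isUnit.mpr hBu
      exact (hinj.ne_iff' (by simp)).2 hx
    have h := hA.dotProduct_mulVec_pos hx'
    have e : star x ⬝ᵥ (B * A * B) *ᵥ x = star (B *ᵥ x) ⬝ᵥ A *ᵥ (B *ᵥ x) := by
      rw [star_mulVec, hB.eq, ← Matrix.mulVec_mulVec, ← Matrix.mulVec_mulVec,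
        dotProduct_mulVec]
    rw [e]
    exact h

/-- Closed form for the chain `Λ_{k+1} = (w_{k+1} + (1/n)·L_k⁻¹)·Λ_k·(w_{k+1} + (1/n)·L_k⁻¹)`
driven by `L_{k+1} = w_{k+1}·L_k·w_{k+1} + (1/n)·w_{k+1}`: each `L_k` is positive definite
and for every `k`,
`Λ_k = L_k·(w_k⁻¹ ⋯ w_1⁻¹)·ℓ₀⁻¹·Λ₀·ℓ₀⁻¹·(w_1⁻¹ ⋯ w_k⁻¹)·L_k`. -/
theorem stmt_14 (r : ℕ) (hr : 1 ≤ r) (n : ℕ) (hn : 1 ≤ n)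
    (ℓ₀ Λ₀ : Matrix (Fin r) (Fin r) ℝ) (hℓ₀ : ℓ₀.PosDef) (hΛ₀ : Λ₀.PosDef)
    (w : ℕ → Matrix (Fin r) (Fin r) ℝ) (hw : ∀ k, 1 ≤ k → (w k).PosDef)
    (L : ℕ → Matrix (Fin r) (Fin r) ℝ)
    (hL0 : L 0 = ℓ₀)
    (hL : ∀ k, L (k + 1) = w (k + 1) * L k * w (k + 1) + ((n : ℝ))⁻¹ • w (k + 1))
    (Λ : ℕ → Matrix (Fin r) (Fin r) ℝ)
    (hΛ0 : Λ 0 = Λ₀)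
    (hΛ : ∀ k, Λ (k + 1) =
      (w (k + 1) + ((n : ℝ))⁻¹ • (L k)⁻¹) * Λ k * (w (k + 1) + ((n : ℝ))⁻¹ • (L k)⁻¹)) :
    (∀ k, (L k).PosDef) ∧
      ∀ k, Λ k =
        L k * ((List.range k).map fun i => (w (i + 1))⁻¹).reverse.prod * ℓ₀⁻¹ * Λ₀ * ℓ₀⁻¹ *
          ((List.range k).map fun i => (w (i + 1))⁻¹).prod * L k := by
  have hn' : (0:ℝ) < (n : ℝ)⁻¹ := by
    have : (0:ℝ) < (n : ℝ) := by exact_mod_cast hn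
    positivity
  have hLpd : ∀ k, (L k).PosDef := by
    intro k
    induction k with
    | zero => rw [hL0]; exact hℓ₀
    | succ k ih =>
      rw [hL k]
      exact (my_conj_posDef ih (hw (k+1) (by omega)).1 (hw (k+1) (by omega)).isUnit).add
        (my_smul_posDef hn' (hw (k+1) (by omega)))
  refine ⟨hLpd, ?_⟩
  intro k
  induction k with
  | zero =>
    simp only [List.range_zero, List.map_nil, List.reverse_nil, List.prod_nil, mul_one,
      hL0, hΛ0]
    rw [Matrix.mul_nonsing_inv _ ((Matrix.isUnit_iff_isUnit_det _).mp hℓ₀.isUnit), one_mul,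
      mul_assoc, Matrix.nonsing_inv_mul _ ((Matrix.isUnit_iff_isUnit_det _).mp hℓ₀.isUnit),
      mul_one]
  | succ k ih =>
    have hwdet : IsUnit (w (k+1)).det :=
      (Matrix.isUnit_iff_isUnit_det _).mp (hw (k+1) (by omega)).isUnit
    have hLdet : IsUnit (L k).det := (Matrix.isUnit_iff_isUnit_det _).mp (hLpd k).isUnit
    have key1 : (w (k + 1) + ((n : ℝ))⁻¹ • (L k)⁻¹) * L k = L (k + 1) * (w (k + 1))⁻¹ := by
      rw [hL k, Matrix.add_mul, Matrix.add_mul, Matrix.smul_mul, Matrix.smul_mul,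
        Matrix.nonsing_inv_mul _ hLdet, mul_assoc (w (k+1) * L k),
        Matrix.mul_nonsing_inv _ hwdet, mul_one]
    have key2 : L k * (w (k + 1) + ((n : ℝ))⁻¹ • (L k)⁻¹) = (w (k + 1))⁻¹ * L (k + 1) := by
      rw [hL k, Matrix.mul_add, Matrix.mul_add, Matrix.mul_smul, Matrix.mul_smul,
        Matrix.mul_nonsing_inv _ hLdet, ← mul_assoc, ← mul_assoc,
        Matrix.nonsing_inv_mul _ hwdet, one_mul]
    have e : Λ (k + 1) =
        (L (k + 1) * (w (k + 1))⁻¹) *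
          (((List.range k).map fun i => (w (i + 1))⁻¹).reverse.prod * ℓ₀⁻¹ * Λ₀ * ℓ₀⁻¹ *
            ((List.range k).map fun i => (w (i + 1))⁻¹).prod) *
          ((w (k + 1))⁻¹ * L (k + 1)) := by
      rw [hΛ k, ih, ← key1, ← key2]
      simp only [mul_assoc]
    rw [e, List.range_succ, List.map_append, List.reverse_append, List.prod_append,
      List.prod_append]
    simp only [List.map_cons, List.map_nil, List.reverse_cons, List.reverse_nil,
      List.nil_append, List.prod_cons, List.prod_nil, mul_one]
    simp only [mul_assoc]
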